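/- arXiv:1603.04996 — 2 statements merged into one kernel-verified Lean document; each statement's English description precedes it below -/
import Mathlib

section
/- Let G be a connected simple graph on a finite vertex set V and let D ⊆ V be a dominating set of G. Suppose that for any i, j ∈ D there exists a walk i = i₀, i₁, …, i_p = j in G such that between any two consecutive occurrences of members of D along the walk there is at most one vertex not in D (formally: whenever i_s, i_t ∈ D with s < t and i_k ∉ D for s < k < t, then t ≤ s + 2). Then the spanning subgraph G_D of G, whose edges are the edges of G incident to D, is connected. -/
open SimpleGraph

variable {V : Type*}

/-- Spanning subgraph of `G` whose edges are the edges of `G` with at least one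
endpoint in `D` (edge set `I_D(E)`). -/
def incSub (G : SimpleGraph V) (D : Set V) : SimpleGraph V where
  Adj u v := G.Adj u v ∧ (u ∈ D ∨ v ∈ D)
  symm := ⟨fun u v h => ⟨h.1.symm, h.2.symm⟩⟩
  loopless := ⟨fun v h => G.loopless.irrefl v h.1⟩

/-- `D` is a dominating set of `G`. -/
def Dominating (G : SimpleGraph V) (D : Set V) : Prop :=
  ∀ v : V, v ∈ D ∨ ∃ u ∈ D, G.Adj v u

/-- Any two members of `D` are joined by a walk in `G` such that whenever
`i_s, i_t ∈ D`, `s < t`, and no vertex strictly between them lies in `D`,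
it holds that `t = s + 2`. -/
def RelaxedConnEq (G : SimpleGraph V) (D : Set V) : Prop :=
  ∀ i ∈ D, ∀ j ∈ D, ∃ (p : ℕ) (f : ℕ → V), f 0 = i ∧ f p = j ∧
    (∀ k, k < p → G.Adj (f k) (f (k + 1))) ∧
    (∀ s t, s < t → t ≤ p → f s ∈ D → f t ∈ D →
      (∀ k, s < k → k < t → f k ∉ D) → t = s + 2)

/-- Any two members of `D` are joined by a walk in `G` on which between any two
consecutive members of `D` there is at most one vertex not in `D`. -/
def RelaxedConnLe (G : SimpleGraph V) (D : Set V) : Prop :=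
  ∀ i ∈ D, ∀ j ∈ D, ∃ (p : ℕ) (f : ℕ → V), f 0 = i ∧ f p = j ∧
    (∀ k, k < p → G.Adj (f k) (f (k + 1))) ∧
    (∀ s t, s < t → t ≤ p → f s ∈ D → f t ∈ D →
      (∀ k, s < k → k < t → f k ∉ D) → t ≤ s + 2)

theorem stmt_2 [Fintype V] (G : SimpleGraph V) (hG : G.Connected) (D : Set V)
    (hdom : Dominating G D) (hrc : RelaxedConnLe G D) :
    (incSub G D).Connected := by
  classical
  have hne : Nonempty V := hG.nonempty
  obtain ⟨v0⟩ := hne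
  have hD : ∃ d, d ∈ D := by
    rcases hdom v0 with h | ⟨u, hu, _⟩
    · exact ⟨v0, h⟩
    · exact ⟨u, hu⟩
  obtain ⟨d0, hd0⟩ := hD
  have key : ∀ i ∈ D, ∀ j ∈ D, (incSub G D).Reachable i j := by
    intro i hi j hj
    obtain ⟨p, f, h0, hp, hadj, hgap⟩ := hrc i hi j hj
    suffices h : ∀ t, t ≤ p → f t ∈ D → (incSub G D).Reachable i (f t) by
      exact hp ▸ h p le_rfl (hp.symm ▸ hj)
    intro t
    induction t using Nat.strong_induction_on with
    | _ t ih =>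
      intro htp hft
      rcases Nat.eq_zero_or_pos t with rfl | hpos
      · rw [h0]
      · set s := Nat.findGreatest (fun k => f k ∈ D) (t - 1) with hs
        have hsP : f s ∈ D :=
          Nat.findGreatest_spec (P := fun k => f k ∈ D) (Nat.zero_le _) (by simpa [h0] using hi)
        have hst : s < t := lt_of_le_of_lt (Nat.findGreatest_le _) (by omega)
        have hno : ∀ k, s < k → k < t → f k ∉ D := fun k hk1 hk2 =>
          Nat.findGreatest_is_greatest hk1 (by omega)
        have hle : t ≤ s + 2 := hgap s t hst htp hsP hft hno
        have hreach_s : (incSub G D).Reachable i (f s) := ih s hst (by omega) hsP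
        rcases Nat.lt_or_ge t (s + 2) with h2 | h2
        · have ht1 : t = s + 1 := by omega
          have e : (incSub G D).Adj (f s) (f t) := by
            refine ⟨?_, Or.inl hsP⟩
            rw [ht1]; exact hadj s (by omega)
          exact hreach_s.trans e.reachable
        · have ht2 : t = s + 2 := by omega
          have e1 : (incSub G D).Adj (f s) (f (s + 1)) :=
            ⟨hadj s (by omega), Or.inl hsP⟩
          have e2 : (incSub G D).Adj (f (s + 1)) (f t) := by
            refine ⟨?_, Or.inr hft⟩
            rw [ht2]; exact hadj (s + 1) (by omega)
          exact hreach_s.trans (e1.reachable.trans e2.reachable)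
  have tod : ∀ v : V, ∃ d ∈ D, (incSub G D).Reachable v d := by
    intro v
    rcases hdom v with h | ⟨u, hu, hadj⟩
    · exact ⟨v, h, Reachable.refl v⟩
    · exact ⟨u, hu, Adj.reachable ⟨hadj, Or.inr hu⟩⟩
  rw [connected_iff]
  refine ⟨fun u v => ?_, ⟨v0⟩⟩
  obtain ⟨du, hdu, hru⟩ := tod u
  obtain ⟨dv, hdv, hrv⟩ := tod v
  exact hru.trans ((key du hdu dv hdv).trans hrv.symm)
end

section
/- Let G be a connected simple graph on V, D ⊆ V, and suppose (V₀, E₀) is a connected component of the spanning subgraph (V, I_D(E)) with V₀ ≠ V. Let Ẽ = { {u,v} ∈ E(G) : u ∈ V₀, v ∉ V₀ }. Then Ẽ is nonempty and for every edge {u,v} ∈ Ẽ, neither u nor v belongs to D. -/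
open SimpleGraph

variable {V : Type*}

lemma cross_of_walk (G : SimpleGraph V) (S : Set V) :
    ∀ {a b : V}, G.Walk a b → a ∈ S → b ∉ S →
    ∃ u v : V, G.Adj u v ∧ u ∈ S ∧ v ∉ S := by
  intro a b p
  induction p with
  | nil => intro h1 h2; exact absurd h1 h2
  | cons h p ih =>
    rename_i x y z
    intro h1 h2
    by_cases hc : y ∈ S
    · exact ih hc h2
    · exact ⟨_, _, h, h1, hc⟩

theorem stmt_16 [Fintype V] (G : SimpleGraph V) (hG : G.Connected) (D : Set V)
    (V0 : Set V) (c : (incSub G D).ConnectedComponent)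
    (hV0 : V0 = {v : V | (incSub G D).connectedComponentMk v = c})
    (hne : V0 ≠ Set.univ) :
    (∃ u v : V, G.Adj u v ∧ u ∈ V0 ∧ v ∉ V0) ∧
    (∀ u v : V, G.Adj u v → u ∈ V0 → v ∉ V0 → u ∉ D ∧ v ∉ D) := by
  have key : ∀ u v : V, G.Adj u v → u ∈ V0 → v ∉ V0 → u ∉ D ∧ v ∉ D := by
    intro u v huv hu hv
    subst hV0
    have : ¬ (u ∈ D ∨ v ∈ D) := by
      intro hd
      apply hv
      have : (incSub G D).Adj u v := ⟨huv, hd⟩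
      have := SimpleGraph.ConnectedComponent.connectedComponentMk_eq_of_adj this.symm
      simpa [this] using hu
    exact ⟨fun h => this (Or.inl h), fun h => this (Or.inr h)⟩
  refine ⟨?_, key⟩
  obtain ⟨a, ha⟩ := c.exists_rep
  have haV0 : a ∈ V0 := by rw [hV0]; exact ha
  obtain ⟨b, hb⟩ : ∃ b : V, b ∉ V0 := by
    by_contra h
    push_neg at h
    exact hne (Set.eq_univ_of_forall h)
  exact cross_of_walk G V0 (hG.preconnected a b).some haV0 hb
end
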